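/- Let 0 < r ≤ 1 and let b ∈ ℂ with |b - 1| ≤ r. Then |b - (1 - r²)| ≤ |b|·r; equivalently, the point 1 - r² belongs to the disk b·D(1,r) = D(b, |b|r). -/

import Mathlib

open Complex

theorem stmt_14 (r : ℝ) (hr : 0 < r) (hr1 : r ≤ 1) (b : ℂ) (hb : ‖b - 1‖ ≤ r) :
    ‖b - (1 - (r : ℂ) ^ 2)‖ ≤ ‖b‖ * r := by
  have h1 : ‖b - 1‖ ^ 2 ≤ r ^ 2 :=
    pow_le_pow_left₀ (norm_nonneg _) hb 2
  have key : ‖b - (1 - (r : ℂ) ^ 2)‖ ^ 2 ≤ (‖b‖ * r) ^ 2 := by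
    rw [mul_pow, ← Complex.ofReal_pow]
    simp only [Complex.sq_norm, Complex.normSq_apply, Complex.sub_re, Complex.sub_im,
      Complex.one_re, Complex.one_im, Complex.ofReal_re, Complex.ofReal_im] at h1 ⊢
    have hr2 : r ^ 2 ≤ 1 := by nlinarith
    nlinarith [mul_nonneg (sub_nonneg.2 hr2) (sub_nonneg.2 h1)]
  nlinarith [norm_nonneg (b - (1 - (r : ℂ) ^ 2)), norm_nonneg b,
    mul_nonneg (norm_nonneg b) hr.le, key]
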